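/- Let φ be a quadratic differential on ℙ¹ with exponential-type singularities of indexes (k_i, l_i) at distinct points z_1,…,z_b (local form e^{v^{-k_i}} v^{-l_i} h(v) dv² with h nonvanishing), and let Ω_l = ∏_{i=1}^b (z - z_i)^{-l_i} dz² with ∑ l_i = 4. Then there exists a meromorphic function f on ℙ¹, unique up to adding 2πi m (m ∈ ℤ) to f, with poles exactly of order k_i at z_i, such that φ = e^f Ω_l. (Key step: the ratio g = φ/Ω_l is a nonvanishing holomorphic function on ℙ¹∖{z_1,…,z_b} whose logarithm is single-valued near each z_i with a pole of order k_i there.) -/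

import Mathlib

open Complex Filter Bornology

/-- Let `φ` be a quadratic differential on `ℙ¹` with exponential-type
singularities of indexes `(kᵢ, lᵢ)` at distinct points `z₁,…,z_b` (local form
`e^{v^{-kᵢ}} v^{-lᵢ} h(v) dv²` with `h` nonvanishing, in a local coordinate `v`), and
let `Ω_l = ∏ᵢ (z - zᵢ)^{-lᵢ} dz²` with `∑ lᵢ = 4` (so that `Ω_l` extends over `∞`,
the condition at `∞` being that `φ/Ω_l` tends to a nonzero limit).  Then there is a
meromorphic function `f` on `ℙ¹`, unique up to adding `2πi m` (`m ∈ ℤ`), whose poles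
are exactly of order `kᵢ` at `zᵢ`, such that `φ = e^f Ω_l`. -/
private lemma analyticAt_zpow' {f : ℂ → ℂ} {w : ℂ} (hf : AnalyticAt ℂ f w) (h0 : f w ≠ 0)
    (n : ℤ) : AnalyticAt ℂ (fun x => f x ^ n) w := by
  rcases n with n | n
  · simpa using hf.fun_pow n
  · simpa only [zpow_negSucc] using (hf.fun_pow (n+1)).fun_inv (pow_ne_zero _ h0)

private lemma dslope_step (G : ℂ → ℂ) (z₀ w : ℂ) :
    G w = G z₀ + (w - z₀) * dslope G z₀ w := by
  rcases eq_or_ne w z₀ with rfl | hw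
  · simp
  · rw [dslope_of_ne _ hw, slope, smul_eq_mul]
    field_simp [sub_ne_zero.mpr hw]
    rw [vsub_eq_sub]; ring

private lemma taylor_decomp {F : ℂ → ℂ} {z₀ : ℂ} (hF : AnalyticAt ℂ F z₀) (n : ℕ) :
    AnalyticAt ℂ ((Function.swap dslope z₀)^[n] F) z₀ ∧
    ∀ w, F w = (∑ m ∈ Finset.range n,
        (Function.swap dslope z₀)^[m] F z₀ * (w - z₀) ^ m)
      + (w - z₀) ^ n * (Function.swap dslope z₀)^[n] F w := by
  constructor
  · obtain ⟨p, hp⟩ := hF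
    exact (hp.has_fpower_series_iterate_dslope_fslope n).analyticAt
  · induction n with
    | zero => simp
    | succ n ih =>
      intro w
      have h1 := dslope_step ((Function.swap dslope z₀)^[n] F) z₀ w
      rw [Finset.sum_range_succ, Function.iterate_succ_apply']
      rw [ih w, h1]
      show _ = _ + _ + _ * (Function.swap dslope z₀ ((Function.swap dslope z₀)^[n] F)) w
      unfold Function.swap
      ring

private lemma lattice_eq_of_close {x y : ℂ} (hx : ∃ n : ℤ, x = n * (2*Real.pi*I))
    (hy : ∃ n : ℤ, y = n * (2*Real.pi*I)) (hxy : ‖x - y‖ < 1) : x = y := by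
  obtain ⟨n, rfl⟩ := hx; obtain ⟨m, rfl⟩ := hy
  rcases eq_or_ne n m with rfl | hnm
  · rfl
  exfalso
  have h1 : ((n:ℂ)*(2*Real.pi*I) - m*(2*Real.pi*I)) = ((n - m : ℤ) : ℂ) * (2*Real.pi*I) := by
    push_cast; ring
  rw [h1] at hxy
  have h2 : (1:ℝ) ≤ ‖((n - m : ℤ):ℂ)‖ := by
    rw [Complex.norm_intCast]
    exact_mod_cast Int.one_le_abs (sub_ne_zero.mpr hnm)
  have h3 : (1:ℝ) ≤ ‖(2*Real.pi*I : ℂ)‖ := by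
    have : ‖(2*Real.pi*I : ℂ)‖ = 2*Real.pi := by
      simp [norm_mul, Real.pi_pos.le]
    rw [this]
    nlinarith [Real.pi_gt_three]
  rw [norm_mul] at hxy
  nlinarith

private lemma inv_pow_tendsto_cobounded (z₀ : ℂ) {j : ℕ} (hj : 1 ≤ j) :
    Tendsto (fun w => ((w - z₀) ^ j)⁻¹) (cobounded ℂ) (nhds 0) := by
  rw [tendsto_zero_iff_norm_tendsto_zero]
  have h1 : Tendsto (fun w : ℂ => ‖w - z₀‖ ^ j) (cobounded ℂ) atTop := by
    refine (tendsto_pow_atTop (by omega : j ≠ 0)).comp ?_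
    simpa [dist_eq_norm] using Metric.tendsto_dist_right_cobounded_atTop z₀
  have := h1.inv_tendsto_atTop
  refine this.congr fun w => ?_
  simp [norm_inv, norm_pow]

theorem test : True := trivial

theorem exponential_type_differential_is_exp_Hurwitz
    (b : ℕ) (hb : 1 ≤ b) (z : Fin b → ℂ) (hz : Function.Injective z)
    (k : Fin b → ℕ) (hk : ∀ i, 1 ≤ k i) (l : Fin b → ℤ) (hl : ∑ i, l i = 4)
    (φ : ℂ → ℂ)
    (hφ : AnalyticOnNhd ℂ φ {w | ∀ i, w ≠ z i})
    (hφ0 : ∀ w, (∀ i, w ≠ z i) → φ w ≠ 0)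
    (hloc : ∀ i, ∃ (U : Set ℂ) (v h : ℂ → ℂ), IsOpen U ∧ z i ∈ U ∧
      AnalyticOnNhd ℂ v U ∧ AnalyticOnNhd ℂ h U ∧
      v (z i) = 0 ∧ deriv v (z i) ≠ 0 ∧ (∀ w ∈ U, h w ≠ 0) ∧
      ∀ w ∈ U, w ≠ z i →
        φ w = exp ((v w) ^ (-(k i : ℤ))) * (v w) ^ (-(l i)) * h w * (deriv v w) ^ 2)
    (hinf : ∃ c ≠ (0 : ℂ), Filter.Tendsto
      (fun w => φ w / ∏ i, (w - z i) ^ (-(l i)))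
      (Bornology.cobounded ℂ) (nhds c)) :
    ∃ f : ℂ → ℂ,
      AnalyticOnNhd ℂ f {w | ∀ i, w ≠ z i} ∧
      (∀ i, ∃ (U : Set ℂ) (u : ℂ → ℂ), IsOpen U ∧ z i ∈ U ∧
        AnalyticOnNhd ℂ u U ∧ u (z i) ≠ 0 ∧
        ∀ w ∈ U, w ≠ z i → f w = u w / (w - z i) ^ (k i)) ∧
      (∃ c : ℂ, Filter.Tendsto f (Bornology.cobounded ℂ) (nhds c)) ∧
      (∀ w, (∀ i, w ≠ z i) → φ w = exp (f w) * ∏ i, (w - z i) ^ (-(l i))) ∧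
      (∀ f' : ℂ → ℂ, AnalyticOnNhd ℂ f' {w | ∀ i, w ≠ z i} →
        (∀ w, (∀ i, w ≠ z i) → φ w = exp (f' w) * ∏ i, (w - z i) ^ (-(l i))) →
        ∃ m : ℤ, ∀ w, (∀ i, w ≠ z i) →
          f' w = f w + 2 * Real.pi * I * (m : ℂ)) := by
  classical
  obtain ⟨c0, hc00, hctend⟩ := hinf
  choose U v h hUopen hzU hvA hhA hv0 hdv hh0 hφloc using hloc
  -- the local units `u i` with `v i w = (w - z i) * u i w`
  set u : Fin b → ℂ → ℂ := fun i => dslope (v i) (z i) with hu_def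
  have hu_fac : ∀ i w, v i w = (w - z i) * u i w := by
    intro i w
    have h1 := dslope_step (v i) (z i) w
    rw [hv0 i] at h1
    simpa using h1
  have hu_z : ∀ i, u i (z i) = deriv (v i) (z i) := fun i => dslope_same _ _
  have hu_z0 : ∀ i, u i (z i) ≠ 0 := fun i => (hu_z i) ▸ hdv i
  have hu_an : ∀ i, AnalyticAt ℂ (u i) (z i) := by
    intro i
    obtain ⟨p, hp⟩ := hvA i (z i) (hzU i)
    exact hp.has_fpower_series_dslope_fslope.analyticAt
  -- `F i = (u i)⁻ᵏ` and its Taylor decomposition at `z i`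
  set F : Fin b → ℂ → ℂ := fun i w => (u i w ^ (k i))⁻¹ with hF_def
  have hF_an : ∀ i, AnalyticAt ℂ (F i) (z i) := fun i =>
    ((hu_an i).pow (k i)).inv (pow_ne_zero _ (hu_z0 i))
  set a : (i : Fin b) → ℕ → ℂ :=
    fun i m => (Function.swap dslope (z i))^[m] (F i) (z i) with ha_def
  set Q : Fin b → ℂ → ℂ :=
    fun i w => ∑ m ∈ Finset.range (k i), a i m * (w - z i) ^ m with hQ_def
  set R : Fin b → ℂ → ℂ := fun i => (Function.swap dslope (z i))^[k i] (F i) with hR_def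
  have hR_an : ∀ i, AnalyticAt ℂ (R i) (z i) := fun i => (taylor_decomp (hF_an i) (k i)).1
  have hFQR : ∀ i w, F i w = Q i w + (w - z i) ^ (k i) * R i w := fun i w =>
    (taylor_decomp (hF_an i) (k i)).2 w
  have hQz : ∀ i, Q i (z i) = F i (z i) := by
    intro i
    have h2 : Q i (z i) = ∑ m ∈ Finset.range (k i), a i m * (z i - z i) ^ m := rfl
    rw [h2, Finset.sum_eq_single_of_mem 0 (Finset.mem_range.mpr (hk i))]
    · simp [ha_def]
    · intro m _ hm
      simp [zero_pow hm]
  have hQz0 : ∀ i, Q i (z i) ≠ 0 := by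
    intro i
    rw [hQz i]
    exact inv_ne_zero (pow_ne_zero _ (hu_z0 i))
  have hQ_an : ∀ i w₀, AnalyticAt ℂ (Q i) w₀ := by
    intro i w₀
    refine Finset.analyticAt_fun_sum _ fun m _ => ?_
    exact (analyticAt_const.fun_mul (((analyticAt_id).fun_sub analyticAt_const).fun_pow m))
  -- principal parts
  set P : Fin b → ℂ → ℂ := fun i w => Q i w * ((w - z i) ^ (k i))⁻¹ with hP_def
  have hP_an : ∀ i w₀, w₀ ≠ z i → AnalyticAt ℂ (P i) w₀ := by
    intro i w₀ hw
    exact (hQ_an i w₀).mul ((((analyticAt_id).sub analyticAt_const).pow (k i)).inv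
      (pow_ne_zero _ (sub_ne_zero.mpr hw)))
  have hvk : ∀ i w, w ≠ z i → (v i w) ^ (-(k i : ℤ)) = P i w + R i w := by
    intro i w hw
    have hx : (w - z i) ≠ 0 := sub_ne_zero.mpr hw
    have h1 : (v i w) ^ (-(k i : ℤ)) = ((w - z i) ^ (k i))⁻¹ * F i w := by
      rw [zpow_neg, zpow_natCast, hu_fac i w, mul_pow, mul_inv]
    rw [h1, hFQR i w, hP_def]
    field_simp
  -- Ω and g
  set Ω : ℂ → ℂ := fun w => ∏ i, (w - z i) ^ (-(l i)) with hΩ_def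
  have hΩ0 : ∀ w, (∀ i, w ≠ z i) → Ω w ≠ 0 := by
    intro w hw
    exact Finset.prod_ne_zero_iff.mpr fun i _ =>
      zpow_ne_zero _ (sub_ne_zero.mpr (hw i))
  have hΩ_an : ∀ w₀, (∀ i, w₀ ≠ z i) → AnalyticAt ℂ Ω w₀ := by
    intro w₀ hw
    exact Finset.analyticAt_fun_prod _ fun i _ =>
      analyticAt_zpow' ((analyticAt_id).sub analyticAt_const)
        (sub_ne_zero.mpr (hw i)) _
  set g : ℂ → ℂ := fun w => φ w / Ω w with hg_def
  have hg_an : ∀ w₀, (∀ i, w₀ ≠ z i) → AnalyticAt ℂ g w₀ := by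
    intro w₀ hw
    exact (hφ w₀ hw).div (hΩ_an w₀ hw) (hΩ0 w₀ hw)
  have hφg : ∀ w, (∀ i, w ≠ z i) → φ w = g w * Ω w := by
    intro w hw
    rw [hg_def]
    field_simp [hΩ0 w hw]
  have hΩinv : ∀ w, (Ω w)⁻¹ = ∏ j, (w - z j) ^ (l j) := by
    intro w
    rw [hΩ_def]
    rw [← Finset.prod_inv_distrib]
    exact Finset.prod_congr rfl fun j _ => by rw [zpow_neg, inv_inv]
  -- the nonvanishing analytic local factor
  set Hi : Fin b → ℂ → ℂ := fun i w => u i w ^ (-(l i)) * h i w * (deriv (v i) w) ^ 2 *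
    ∏ j ∈ Finset.univ.erase i, (w - z j) ^ (l j) with hHi_def
  have hHi_an : ∀ i, AnalyticAt ℂ (Hi i) (z i) := by
    intro i
    refine (((analyticAt_zpow' (hu_an i) (hu_z0 i) _).mul
      (hhA i (z i) (hzU i))).mul
      (((hvA i).deriv (z i) (hzU i)).pow 2)).mul ?_
    refine Finset.analyticAt_fun_prod _ fun j hj => ?_
    have hne : (z i) - (z j) ≠ 0 := sub_ne_zero.mpr (hz.ne (Finset.ne_of_mem_erase hj).symm)
    exact analyticAt_zpow' ((analyticAt_id).sub analyticAt_const) hne _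
  have hg_loc : ∀ i, ∀ w ∈ U i, (∀ j, w ≠ z j) →
      g w = exp ((v i w) ^ (-(k i : ℤ))) * Hi i w := by
    intro i w hwU hwS
    have hprod : ∏ j, (w - z j) ^ (l j)
        = (w - z i) ^ (l i) * ∏ j ∈ Finset.univ.erase i, (w - z j) ^ (l j) :=
      (Finset.mul_prod_erase _ _ (Finset.mem_univ i)).symm
    have hv_split : (v i w) ^ (-(l i)) = (w - z i) ^ (-(l i)) * (u i w) ^ (-(l i)) := by
      rw [hu_fac i w, mul_zpow]
    have hcancel : (w - z i) ^ (-(l i)) * (w - z i) ^ (l i) = 1 := by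
      rw [zpow_neg]
      exact inv_mul_cancel₀ (zpow_ne_zero _ (sub_ne_zero.mpr (hwS i)))
    have hgw : g w = φ w * (Ω w)⁻¹ := div_eq_mul_inv _ _
    rw [hgw, hΩinv w, hφloc i w hwU (hwS i), hprod, hv_split, hHi_def]
    have : exp (v i w ^ (-(k i : ℤ))) * ((w - z i) ^ (-(l i)) * u i w ^ (-(l i))) * h i w *
          deriv (v i) w ^ 2 *
          ((w - z i) ^ (l i) * ∏ j ∈ Finset.univ.erase i, (w - z j) ^ (l j))
        = ((w - z i) ^ (-(l i)) * (w - z i) ^ (l i)) *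
          (exp (v i w ^ (-(k i : ℤ))) * (u i w ^ (-(l i)) * h i w * deriv (v i) w ^ 2 *
            ∏ j ∈ Finset.univ.erase i, (w - z j) ^ (l j))) := by ring
    rw [this, hcancel, one_mul]
  -- the sum of principal parts, and the global function e₀
  set Psum : ℂ → ℂ := fun w => ∑ j, P j w with hPsum_def
  have hPsum_an : ∀ w₀, (∀ i, w₀ ≠ z i) → AnalyticAt ℂ Psum w₀ := by
    intro w₀ hw
    exact Finset.analyticAt_fun_sum _ fun j _ => hP_an j w₀ (hw j)
  set e₀ : ℂ → ℂ := fun w => g w * exp (-(Psum w)) with he₀_def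
  set A : Fin b → ℂ → ℂ := fun i w =>
    exp (R i w - ∑ j ∈ Finset.univ.erase i, P j w) * Hi i w with hA_def
  have hA_an : ∀ i, AnalyticAt ℂ (A i) (z i) := by
    intro i
    refine (AnalyticAt.cexp ?_).mul (hHi_an i)
    refine (hR_an i).sub (Finset.analyticAt_fun_sum _ fun j hj => ?_)
    exact hP_an j (z i) (hz.ne (Finset.ne_of_mem_erase hj).symm)
  have he₀A : ∀ i, ∀ w ∈ U i, (∀ j, w ≠ z j) → e₀ w = A i w := by
    intro i w hwU hwS
    rw [he₀_def]
    have h1 : g w = exp ((v i w) ^ (-(k i : ℤ))) * Hi i w := hg_loc i w hwU hwS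
    have h2 : (v i w) ^ (-(k i : ℤ)) = P i w + R i w := hvk i w (hwS i)
    have h3 : Psum w = P i w + ∑ j ∈ Finset.univ.erase i, P j w :=
      (Finset.add_sum_erase _ _ (Finset.mem_univ i)).symm
    show g w * exp (-(Psum w)) = A i w
    rw [h1, h2, h3, hA_def]
    rw [show exp (P i w + R i w) * Hi i w * exp (-(P i w + ∑ j ∈ Finset.univ.erase i, P j w))
        = exp (P i w + R i w) * exp (-(P i w + ∑ j ∈ Finset.univ.erase i, P j w)) * Hi i w
      from by ring, ← Complex.exp_add]
    congr 2
    ring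
  -- the entire extension
  set e : ℂ → ℂ := fun w =>
    if w ∈ Set.range z then limUnder (nhdsWithin w {w}ᶜ) e₀ else e₀ w with he_def
  have hrange_closed : IsClosed (Set.range z) := (Set.finite_range z).isClosed
  have he_out : ∀ w, (∀ i, w ≠ z i) → e w = e₀ w := by
    intro w hw
    rw [he_def]
    have : w ∉ Set.range z := by
      rintro ⟨i, rfl⟩
      exact hw i rfl
    simp [this]
  -- near each z i, e agrees with A i
  have heA : ∀ i, ∀ᶠ w in nhds (z i), e w = A i w := by
    intro i
    set V : Set ℂ := U i ∩ ⋂ j ∈ Finset.univ.erase i, {z j}ᶜ with hV_def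
    have hVopen : IsOpen V := (hUopen i).inter
      (isOpen_biInter_finset fun j _ => isOpen_compl_singleton)
    have hziV : z i ∈ V := by
      refine ⟨hzU i, ?_⟩
      simp only [Set.mem_iInter, Set.mem_compl_iff, Set.mem_singleton_iff]
      intro j hj heq
      exact (hz.ne (Finset.ne_of_mem_erase hj).symm) heq
    have hVS : ∀ w ∈ V, w ≠ z i → (∀ j, w ≠ z j) := by
      intro w hw hwi j
      rcases eq_or_ne j i with rfl | hji
      · exact hwi
      · have := hw.2
        simp only [Set.mem_iInter, Set.mem_compl_iff, Set.mem_singleton_iff] at this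
        exact this j (Finset.mem_erase.mpr ⟨hji, Finset.mem_univ j⟩)
    have hVeq : ∀ w ∈ V, w ≠ z i → e w = A i w := by
      intro w hw hwi
      rw [he_out w (hVS w hw hwi)]
      exact he₀A i w hw.1 (hVS w hw hwi)
    have hlim : e (z i) = A i (z i) := by
      have hmem : z i ∈ Set.range z := ⟨i, rfl⟩
      rw [he_def]
      simp only [hmem, if_true]
      have htendA : Tendsto (A i) (nhdsWithin (z i) {z i}ᶜ) (nhds (A i (z i))) :=
        ((hA_an i).continuousAt.continuousWithinAt : ContinuousWithinAt (A i) _ _)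
      have hev : e₀ =ᶠ[nhdsWithin (z i) {z i}ᶜ] A i := by
        have : V ∈ nhdsWithin (z i) {z i}ᶜ :=
          nhdsWithin_le_nhds (hVopen.mem_nhds hziV)
        filter_upwards [this, self_mem_nhdsWithin] with w hwV hwne
        exact he₀A i w hwV.1 (hVS w hwV hwne)
      exact (htendA.congr' hev.symm).limUnder_eq
    filter_upwards [hVopen.mem_nhds hziV] with w hwV
    rcases eq_or_ne w (z i) with rfl | hwne
    · exact hlim
    · exact hVeq w hwV hwne
  have he_diff : Differentiable ℂ e := by
    intro w₀
    by_cases hw : ∀ i, w₀ ≠ z i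
    · have hopen : IsOpen {w : ℂ | ∀ i, w ≠ z i} := by
        have : {w : ℂ | ∀ i, w ≠ z i} = (Set.range z)ᶜ := by
          ext w
          simp only [Set.mem_setOf_eq, Set.mem_compl_iff, Set.mem_range, not_exists]
          exact ⟨fun hh i e => hh i e.symm, fun hh i e => hh i e.symm⟩
        rw [this]
        exact hrange_closed.isOpen_compl
      have hev : e =ᶠ[nhds w₀] e₀ := by
        filter_upwards [hopen.mem_nhds hw] with w hwm
        exact he_out w hwm
      have he₀an : AnalyticAt ℂ e₀ w₀ :=
        (hg_an w₀ hw).mul (AnalyticAt.cexp (hPsum_an w₀ hw).neg)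
      exact (he₀an.congr hev.symm).differentiableAt
    · push_neg at hw
      obtain ⟨i, hi⟩ := hw
      rw [hi]
      have hEq : e =ᶠ[nhds (z i)] A i := heA i
      exact ((hA_an i).congr hEq.symm).differentiableAt
  -- e tends to c0 at infinity
  have hP0 : ∀ i, Tendsto (P i) (cobounded ℂ) (nhds 0) := by
    intro i
    have hne : ∀ᶠ w : ℂ in cobounded ℂ, w ≠ z i := by
      filter_upwards [(Metric.tendsto_dist_right_cobounded_atTop (z i)).eventually_ge_atTop 1]
        with w hw
      intro hcon
      rw [hcon] at hw
      simp at hw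
      linarith
    have hterm : ∀ m ∈ Finset.range (k i), Tendsto
        (fun w => a i m * (w - z i) ^ m * ((w - z i) ^ (k i))⁻¹) (cobounded ℂ) (nhds 0) := by
      intro m hm
      rw [Finset.mem_range] at hm
      have hj : 1 ≤ k i - m := by omega
      have := (inv_pow_tendsto_cobounded (z i) hj).const_mul (a i m)
      rw [mul_zero] at this
      refine this.congr' ?_
      filter_upwards [hne] with w hw
      have hx : (w - z i) ≠ 0 := sub_ne_zero.mpr hw
      have hsplit : (k i) = m + (k i - m) := by omega
      rw [hsplit, pow_add, mul_inv]
      field_simp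
      rw [Nat.add_sub_cancel_left]
    have hsum := tendsto_finset_sum (Finset.range (k i)) hterm
    rw [Finset.sum_const_zero] at hsum
    refine hsum.congr fun w => ?_
    simp only [hP_def, hQ_def, Finset.sum_mul]
  have hPsum0 : Tendsto Psum (cobounded ℂ) (nhds 0) := by
    have := tendsto_finset_sum (Finset.univ : Finset (Fin b)) (fun i _ => hP0 i)
    rw [Finset.sum_const_zero] at this
    exact this
  have he_lim : Tendsto e (cobounded ℂ) (nhds c0) := by
    have htend₀ : Tendsto e₀ (cobounded ℂ) (nhds c0) := by
      have hexp : Tendsto (fun w => exp (-(Psum w))) (cobounded ℂ) (nhds 1) := by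
        have : Tendsto (fun w => -(Psum w)) (cobounded ℂ) (nhds 0) := by
          simpa using hPsum0.neg
        have := (Complex.continuous_exp.tendsto 0).comp this
        simpa [Function.comp_def] using this
      have := hctend.mul hexp
      rw [mul_one] at this
      exact this
    refine htend₀.congr' ?_ |>.mono_left le_rfl
    have hbd : ∀ᶠ w : ℂ in cobounded ℂ, (∀ i, w ≠ z i) := by
      rw [eventually_all]
      intro i
      filter_upwards [(Metric.tendsto_dist_right_cobounded_atTop (z i)).eventually_ge_atTop 1]
        with w hw hcon
      rw [hcon] at hw
      simp at hw
      linarith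
    filter_upwards [hbd] with w hw
    exact (he_out w hw).symm
  -- Liouville
  have he_const : ∀ w, e w = c0 := by
    intro w
    refine he_diff.apply_eq_of_tendsto_cocompact w ?_
    rwa [← Metric.cobounded_eq_cocompact]
  have hgc : ∀ w, (∀ i, w ≠ z i) → g w = c0 * exp (Psum w) := by
    intro w hw
    have h1 : g w * exp (-(Psum w)) = c0 := by
      have h0 := he_const w
      rw [he_out w hw] at h0
      exact h0
    have h2 := congrArg (· * exp (Psum w)) h1
    rw [mul_assoc, ← Complex.exp_add] at h2
    simp at h2
    exact h2
  -- S is open and preconnected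
  have hSeq : {w : ℂ | ∀ i, w ≠ z i} = (Set.range z)ᶜ := by
    ext w
    simp only [Set.mem_setOf_eq, Set.mem_compl_iff, Set.mem_range, not_exists]
    exact ⟨fun hh i e => hh i e.symm, fun hh i e => hh i e.symm⟩
  have hSopen : IsOpen {w : ℂ | ∀ i, w ≠ z i} := by
    rw [hSeq]; exact hrange_closed.isOpen_compl
  have hScon : IsPreconnected {w : ℂ | ∀ i, w ≠ z i} := by
    rw [hSeq]
    exact ((Set.finite_range z).countable.isConnected_compl_of_one_lt_rank
      (by rw [rank_real_complex]; exact Cardinal.one_lt_two)).isPreconnected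
  have hSne : ∃ w₀, ∀ i, w₀ ≠ z i := by
    have : ({w : ℂ | ∀ i, w ≠ z i}).Nonempty := by
      rw [hSeq]
      exact ((Set.finite_range z).infinite_compl).nonempty
    obtain ⟨w₀, hw₀⟩ := this
    exact ⟨w₀, hw₀⟩
  -- the main identity
  have hmain : ∀ w, (∀ i, w ≠ z i) →
      φ w = exp (Complex.log c0 + Psum w) * ∏ i, (w - z i) ^ (-(l i)) := by
    intro w hw
    have a1 : φ w = g w * Ω w := hφg w hw
    rw [hgc w hw] at a1
    have a2 : exp (Complex.log c0 + Psum w) = c0 * exp (Psum w) := by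
      rw [Complex.exp_add, Complex.exp_log hc00]
    rw [hΩ_def] at a1
    rw [a2]
    exact a1
  refine ⟨fun w => Complex.log c0 + Psum w, ?_, ?_, ?_, ?_, ?_⟩
  · -- analyticity
    intro w hw
    exact analyticAt_const.add (hPsum_an w hw)
  · -- local pole structure
    intro i
    refine ⟨⋂ j ∈ Finset.univ.erase i, {z j}ᶜ,
      fun w => (w - z i) ^ (k i) * (Complex.log c0 + ∑ j ∈ Finset.univ.erase i, P j w) + Q i w,
      isOpen_biInter_finset (fun j _ => isOpen_compl_singleton), ?_, ?_, ?_, ?_⟩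
    · simp only [Set.mem_iInter, Set.mem_compl_iff, Set.mem_singleton_iff]
      intro j hj heq
      exact (hz.ne (Finset.ne_of_mem_erase hj).symm) heq
    · intro w hw
      simp only [Set.mem_iInter, Set.mem_compl_iff, Set.mem_singleton_iff] at hw
      exact ((((analyticAt_id).fun_sub analyticAt_const).fun_pow _).fun_mul
        (analyticAt_const.fun_add (Finset.analyticAt_fun_sum _ fun j hj =>
          hP_an j w (hw j hj)))).fun_add (hQ_an i w)
    · have hzero : (z i - z i) ^ (k i) = (0:ℂ) := by
        rw [sub_self]
        exact zero_pow (Nat.one_le_iff_ne_zero.mp (hk i))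
      simp only [hzero, zero_mul, zero_add]
      exact hQz0 i
    · intro w hwU hwne
      simp only
      have hx : ((w - z i) ^ (k i)) ≠ (0:ℂ) := pow_ne_zero _ (sub_ne_zero.mpr hwne)
      have hsplit : Psum w = P i w + ∑ j ∈ Finset.univ.erase i, P j w :=
        (Finset.add_sum_erase _ _ (Finset.mem_univ i)).symm
      rw [hsplit, hP_def]
      field_simp
      ring
  · -- limit at infinity
    refine ⟨Complex.log c0, ?_⟩
    have := tendsto_const_nhds (x := Complex.log c0) (f := cobounded ℂ) |>.add hPsum0
    simpa using this
  · -- the product formula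
    exact hmain
  · -- uniqueness
    intro f' hf'A hf'eq
    obtain ⟨w₀, hw₀S⟩ := hSne
    have hdper : ∀ w, (∀ i, w ≠ z i) →
        ∃ n : ℤ, f' w - (Complex.log c0 + Psum w) = n * (2*Real.pi*I) := by
      intro w hw
      have a1 : φ w = exp (f' w) * ∏ i, (w - z i) ^ (-(l i)) := hf'eq w hw
      have a2 : φ w = exp (Complex.log c0 + Psum w) * ∏ i, (w - z i) ^ (-(l i)) := hmain w hw
      rw [a1] at a2
      have hΩ0' : (∏ i, (w - z i) ^ (-(l i))) ≠ 0 := by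
        have := hΩ0 w hw
        rwa [hΩ_def] at this
      have h2 : exp (f' w) = exp (Complex.log c0 + Psum w) :=
        mul_right_cancel₀ hΩ0' a2
      have h3 : exp (f' w - (Complex.log c0 + Psum w)) = 1 := by
        rw [Complex.exp_sub, h2, div_self (Complex.exp_ne_zero _)]
      exact Complex.exp_eq_one_iff.mp h3
    have hdloc : ∀ w₁, (∀ i, w₁ ≠ z i) → ∀ᶠ w in nhds w₁,
        f' w - (Complex.log c0 + Psum w) = f' w₁ - (Complex.log c0 + Psum w₁) := by
      intro w₁ hw₁
      have hcont : ContinuousAt (fun w => f' w - (Complex.log c0 + Psum w)) w₁ :=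
        ((hf'A w₁ hw₁).continuousAt).sub
          ((analyticAt_const.add (hPsum_an w₁ hw₁)).continuousAt)
      have hev1 : ∀ᶠ w in nhds w₁,
          (f' w - (Complex.log c0 + Psum w)) ∈
            Metric.ball (f' w₁ - (Complex.log c0 + Psum w₁)) 1 :=
        hcont.eventually_mem (Metric.ball_mem_nhds _ one_pos)
      filter_upwards [hev1, hSopen.mem_nhds (hw₁ : w₁ ∈ {w : ℂ | ∀ i, w ≠ z i})]
        with w hball hwS
      refine lattice_eq_of_close (hdper w hwS) (hdper w₁ hw₁) ?_
      rw [Metric.mem_ball, dist_eq_norm] at hball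
      exact hball
    have hconst : ∀ w, (∀ i, w ≠ z i) →
        f' w - (Complex.log c0 + Psum w) = f' w₀ - (Complex.log c0 + Psum w₀) := by
      set T₁ : Set ℂ := {w | (∀ i, w ≠ z i) ∧
        f' w - (Complex.log c0 + Psum w) = f' w₀ - (Complex.log c0 + Psum w₀)} with hT₁
      set T₂ : Set ℂ := {w | (∀ i, w ≠ z i) ∧
        f' w - (Complex.log c0 + Psum w) ≠ f' w₀ - (Complex.log c0 + Psum w₀)} with hT₂
      have hT₁o : IsOpen T₁ := by
        rw [isOpen_iff_mem_nhds]
        intro w₁ hw₁m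
        filter_upwards [hdloc w₁ hw₁m.1,
          hSopen.mem_nhds (hw₁m.1 : w₁ ∈ {w : ℂ | ∀ i, w ≠ z i})] with w hwd hwS
        exact ⟨hwS, by rw [hwd, hw₁m.2]⟩
      have hT₂o : IsOpen T₂ := by
        rw [isOpen_iff_mem_nhds]
        intro w₁ hw₁m
        filter_upwards [hdloc w₁ hw₁m.1,
          hSopen.mem_nhds (hw₁m.1 : w₁ ∈ {w : ℂ | ∀ i, w ≠ z i})] with w hwd hwS
        refine ⟨hwS, ?_⟩
        rw [hwd]
        exact hw₁m.2
      have hsub : {w : ℂ | ∀ i, w ≠ z i} ⊆ T₁ ∪ T₂ := by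
        intro w hw
        by_cases hd : f' w - (Complex.log c0 + Psum w) = f' w₀ - (Complex.log c0 + Psum w₀)
        · exact Or.inl ⟨hw, hd⟩
        · exact Or.inr ⟨hw, hd⟩
      have hdisj : Disjoint T₁ T₂ := by
        rw [Set.disjoint_left]
        rintro x ⟨_, h1⟩ ⟨_, h2⟩
        exact h2 h1
      have hfinal := hScon.subset_left_of_subset_union hT₁o hT₂o hdisj hsub
        ⟨w₀, hw₀S, hw₀S, rfl⟩
      intro w hw
      exact (hfinal hw).2
    obtain ⟨n0, hn0⟩ := hdper w₀ hw₀S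
    refine ⟨n0, ?_⟩
    intro w hw
    have hc := hconst w hw
    rw [hn0] at hc
    show f' w = (Complex.log c0 + Psum w) + 2*Real.pi*I*(n0:ℂ)
    linear_combination hc
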